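/- Logarithmic decomposition of the Gács–Körner common information: let X : Ω → α and Y : Ω → β be random variables on a finite probability space, let ≈ be the equivalence relation on Ω generated by the relation {(ω, ω′) : X(ω) = X(ω′) or Y(ω) = Y(ω′)}, and let Z : Ω → Ω/≈ be the quotient map. Then C(Z) ⊆ C(X) ∩ C(Y), and the Gács–Körner common information sup{ H(f ∘ X) : f : α → γ, g : β → γ with f ∘ X = g ∘ Y } equals Σ_{S ∈ C(Z)} L°(S). -/

import Mathlib

open Finset
open scoped Classical

/-- The total loss of a finite family of reals:
`L(p_1, …, p_n) = Σ_i p_i log(1/p_i) − (Σ_i p_i) log(1/Σ_i p_i)`. -/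
noncomputable def totalLoss {ι : Type*} (s : Finset ι) (p : ι → ℝ) : ℝ :=
  ∑ i ∈ s, p i * Real.log (1 / p i) - (∑ i ∈ s, p i) * Real.log (1 / ∑ i ∈ s, p i)

/-- The interior loss, defined by inclusion–exclusion:
`L°(p_1, …, p_n) = Σ_{S ⊆ {1,…,n}} (−1)^{n−|S|} L((p_i)_{i∈S})`. -/
noncomputable def interiorLoss {ι : Type*} [DecidableEq ι] (s : Finset ι) (p : ι → ℝ) : ℝ :=
  ∑ T ∈ s.powerset, (-1 : ℝ) ^ (s.card - T.card) * totalLoss T p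

/-- The probability that the random variable `X : Ω → α` takes the value `a`,
with respect to the mass function `P`. -/
noncomputable def probOf {Ω α : Type*} [Fintype Ω] (P : Ω → ℝ) (X : Ω → α) (a : α) : ℝ :=
  ∑ ω ∈ Finset.univ.filter (fun ω => X ω = a), P ω

/-- The Shannon entropy `H(X) = Σ_{a ∈ X(Ω)} P(X = a) log(1/P(X = a))` of a random
variable `X : Ω → α` with respect to the mass function `P`. -/
noncomputable def entropy {Ω α : Type*} [Fintype Ω] (P : Ω → ℝ) (X : Ω → α) : ℝ :=
  ∑ a ∈ Finset.univ.image X, probOf P X a * Real.log (1 / probOf P X a)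

/-- The content `C(X)` of a random variable `X : Ω → α`: the collection of subsets
`S ⊆ Ω` with `|S| ≥ 2` on which `X` is not constant. -/
noncomputable def content {Ω α : Type*} [Fintype Ω] (X : Ω → α) : Finset (Finset Ω) :=
  Finset.univ.filter (fun S => 2 ≤ S.card ∧ ∃ ω ∈ S, ∃ ω2 ∈ S, X ω ≠ X ω2)
lemma totalLoss_empty {ι : Type*} (p : ι → ℝ) : totalLoss ∅ p = 0 := by
  simp [totalLoss]

lemma totalLoss_singleton {ι : Type*} (p : ι → ℝ) (i : ι) : totalLoss {i} p = 0 := by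
  simp [totalLoss]

lemma interiorLoss_of_card_le_one {ι : Type*} [DecidableEq ι] (s : Finset ι) (p : ι → ℝ)
    (h : s.card ≤ 1) : interiorLoss s p = 0 := by
  interval_cases h' : s.card
  · rw [Finset.card_eq_zero] at h'
    subst h'
    simp [interiorLoss, totalLoss_empty]
  · rw [Finset.card_eq_one] at h'
    obtain ⟨i, rfl⟩ := h'
    rw [interiorLoss]
    refine Finset.sum_eq_zero fun T hT => ?_
    rw [Finset.mem_powerset, Finset.subset_singleton_iff] at hT
    rcases hT with rfl | rfl
    · simp [totalLoss_empty]
    · simp [totalLoss_singleton]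

lemma sum_interiorLoss_powerset {ι : Type*} [DecidableEq ι] (s : Finset ι) (p : ι → ℝ) :
    ∑ T ∈ s.powerset, interiorLoss T p = totalLoss s p := by
  have swap : ∑ T ∈ s.powerset, interiorLoss T p
      = ∑ U ∈ s.powerset, ∑ T ∈ s.powerset.filter (fun T => U ⊆ T),
          (-1 : ℝ) ^ (T.card - U.card) * totalLoss U p := by
    unfold interiorLoss
    refine Finset.sum_comm' ?_
    intro T U
    simp only [Finset.mem_powerset, Finset.mem_filter]
    constructor
    · rintro ⟨h1, h2⟩; exact ⟨⟨h1, h2⟩, h2.trans h1⟩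
    · rintro ⟨⟨h1, h2⟩, _⟩; exact ⟨h1, h2⟩
  rw [swap]
  have inner : ∀ U ∈ s.powerset, ∑ T ∈ s.powerset.filter (fun T => U ⊆ T),
      (-1 : ℝ) ^ (T.card - U.card) * totalLoss U p
      = (if U = s then (1:ℝ) else 0) * totalLoss U p := by
    intro U hU
    rw [Finset.mem_powerset] at hU
    rw [← Finset.sum_mul]
    congr 1
    have key : ∑ T ∈ s.powerset.filter (fun T => U ⊆ T), (-1 : ℝ) ^ (T.card - U.card)
        = ∑ V ∈ (s \ U).powerset, (-1 : ℝ) ^ V.card := by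
      refine Finset.sum_nbij' (fun T => T \ U) (fun V => V ∪ U) ?_ ?_ ?_ ?_ ?_
      · intro T hT
        simp only [Finset.mem_filter, Finset.mem_powerset] at hT ⊢
        exact Finset.sdiff_subset_sdiff hT.1 le_rfl
      · intro V hV
        simp only [Finset.mem_filter, Finset.mem_powerset] at hV ⊢
        refine ⟨Finset.union_subset (hV.trans (Finset.sdiff_subset)) hU, Finset.subset_union_right⟩
      · intro T hT
        simp only [Finset.mem_filter, Finset.mem_powerset] at hT
        exact Finset.sdiff_union_of_subset hT.2
      · intro V hV
        simp only [Finset.mem_powerset] at hV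
        ext x
        simp only [Finset.mem_sdiff, Finset.mem_union]
        constructor
        · rintro ⟨h1 | h1, h2⟩
          · exact h1
          · exact absurd h1 h2
        · intro hx
          exact ⟨Or.inl hx, (Finset.mem_sdiff.mp (hV hx)).2⟩
      · intro T hT
        simp only [Finset.mem_filter, Finset.mem_powerset] at hT
        rw [Finset.card_sdiff_of_subset hT.2]
    rw [key]
    have := @Finset.sum_powerset_neg_one_pow_card ι _ (s \ U)
    have h2 : ∑ V ∈ (s \ U).powerset, (-1 : ℝ) ^ V.card
        = ((∑ V ∈ (s \ U).powerset, (-1 : ℤ) ^ V.card : ℤ) : ℝ) := by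
      push_cast; rfl
    rw [h2, this]
    by_cases h : U = s
    · simp [h]
    · have : s \ U ≠ ∅ := by
        intro hc
        exact h (Finset.Subset.antisymm hU (by
          intro x hx
          by_contra hxU
          exact (Finset.eq_empty_iff_forall_notMem.mp hc x) (Finset.mem_sdiff.mpr ⟨hx, hxU⟩)))
      simp [h, this]
  rw [Finset.sum_congr rfl inner]
  rw [Finset.sum_eq_single_of_mem s (Finset.mem_powerset_self s)
    (fun b _ hb => by rw [if_neg hb, zero_mul])]
  simp

noncomputable def pickElt {Ω : Type*} [Nonempty Ω] (T : Finset Ω) : Ω :=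
  if h : T.Nonempty then h.choose else Classical.arbitrary Ω

lemma pickElt_mem {Ω : Type*} [Nonempty Ω] {T : Finset Ω} (h : T.Nonempty) : pickElt T ∈ T := by
  rw [pickElt, dif_pos h]
  exact h.choose_spec

lemma entropy_eq_sub {Ω α : Type*} [Fintype Ω] (P : Ω → ℝ) (hsum : ∑ ω, P ω = 1) (W : Ω → α) :
    entropy P W = totalLoss Finset.univ P
      - ∑ a ∈ Finset.univ.image W, totalLoss (Finset.univ.filter (fun ω => W ω = a)) P := by
  have h1 : totalLoss (Finset.univ : Finset Ω) P = ∑ ω, P ω * Real.log (1 / P ω) := by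
    rw [totalLoss, hsum]; simp
  have h2 : ∀ a, totalLoss (Finset.univ.filter (fun ω => W ω = a)) P
      = (∑ ω ∈ Finset.univ.filter (fun ω => W ω = a), P ω * Real.log (1 / P ω))
        - probOf P W a * Real.log (1 / probOf P W a) := by
    intro a; rw [totalLoss, probOf]
  rw [h1]
  rw [Finset.sum_congr rfl (fun a _ => h2 a), Finset.sum_sub_distrib]
  rw [Finset.sum_fiberwise_of_maps_to (fun ω _ => Finset.mem_image_of_mem W (Finset.mem_univ ω))
    (fun ω => P ω * Real.log (1 / P ω))]
  rw [entropy]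
  ring

lemma entropy_eq_sum_content {Ω α : Type*} [Fintype Ω] [Nonempty Ω] (P : Ω → ℝ)
    (hsum : ∑ ω, P ω = 1) (W : Ω → α) :
    entropy P W = ∑ S ∈ content W, interiorLoss S P := by
  classical
  set big : Finset (Finset Ω) :=
    (Finset.univ : Finset Ω).powerset.filter (fun T => 2 ≤ T.card) with hbig
  have drop : ∀ (s : Finset Ω), ∑ T ∈ s.powerset, interiorLoss T P
      = ∑ T ∈ s.powerset.filter (fun T => 2 ≤ T.card), interiorLoss T P := by
    intro s
    rw [Finset.sum_filter_of_ne]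
    intro T _ hne
    by_contra hc
    exact hne (interiorLoss_of_card_le_one T P (by omega))
  -- totalLoss univ = sum over big
  have huniv : totalLoss (Finset.univ : Finset Ω) P = ∑ T ∈ big, interiorLoss T P := by
    rw [← sum_interiorLoss_powerset, drop]
  -- split big into content and constant part
  set constBig : Finset (Finset Ω) := big.filter
    (fun T => ¬ ∃ ω ∈ T, ∃ ω2 ∈ T, W ω ≠ W ω2) with hconstBig
  have hsplit : ∑ T ∈ big, interiorLoss T P
      = ∑ T ∈ content W, interiorLoss T P + ∑ T ∈ constBig, interiorLoss T P := by
    rw [hconstBig, ← Finset.sum_filter_add_sum_filter_not big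
      (fun T => ∃ ω ∈ T, ∃ ω2 ∈ T, W ω ≠ W ω2)]
    congr 2
    rw [content, hbig]
    ext T
    simp [and_assoc]
  -- sum of fiber losses equals sum over constBig
  have hfib : ∑ a ∈ Finset.univ.image W, totalLoss (Finset.univ.filter (fun ω => W ω = a)) P
      = ∑ T ∈ constBig, interiorLoss T P := by
    have step1 : ∀ a, totalLoss (Finset.univ.filter (fun ω => W ω = a)) P
        = ∑ T ∈ (Finset.univ.filter (fun ω => W ω = a)).powerset.filter (fun T => 2 ≤ T.card),
            interiorLoss T P := by
      intro a; rw [← sum_interiorLoss_powerset, drop]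
    rw [Finset.sum_congr rfl (fun a _ => step1 a)]
    have maps : ∀ T ∈ constBig, W (pickElt T) ∈ Finset.univ.image W :=
      fun T _ => Finset.mem_image_of_mem W (Finset.mem_univ _)
    rw [← Finset.sum_fiberwise_of_maps_to maps (fun T => interiorLoss T P)]
    refine Finset.sum_congr rfl fun a _ => Finset.sum_congr ?_ (fun _ _ => rfl)
    ext T
    simp only [Finset.mem_filter, Finset.mem_powerset, hconstBig, hbig]
    constructor
    · rintro ⟨hsub, hcard⟩
      have hne : T.Nonempty := Finset.card_pos.mp (by omega)
      have hval : ∀ x ∈ T, W x = a := fun x hx =>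
        (Finset.mem_filter.mp (hsub hx)).2
      refine ⟨⟨⟨Finset.subset_univ T, hcard⟩, ?_⟩, hval _ (pickElt_mem hne)⟩
      push_neg
      intro x hx y hy
      rw [hval x hx, hval y hy]
    · rintro ⟨⟨⟨_, hcard⟩, hconst⟩, hpick⟩
      push_neg at hconst
      refine ⟨fun x hx => Finset.mem_filter.mpr ⟨Finset.mem_univ x, ?_⟩, hcard⟩
      rw [← hpick]
      exact hconst x hx (pickElt T) (pickElt_mem (Finset.card_pos.mp (by omega)))
  rw [entropy_eq_sub P hsum W, huniv, hsplit, hfib]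
  ring

lemma probOf_pos {Ω α : Type*} [Fintype Ω] {P : Ω → ℝ} (hP : ∀ ω, 0 < P ω) (W : Ω → α)
    {a : α} (ha : a ∈ Finset.univ.image W) : 0 < probOf P W a := by
  rw [Finset.mem_image] at ha
  obtain ⟨ω0, -, rfl⟩ := ha
  rw [probOf]
  refine Finset.sum_pos (fun ω _ => hP ω) ⟨ω0, Finset.mem_filter.mpr ⟨Finset.mem_univ _, rfl⟩⟩

lemma probOf_comp {Ω α β : Type*} [Fintype Ω] (P : Ω → ℝ) (W : Ω → α) (k : α → β) (b : β) :
    probOf P (k ∘ W) b = ∑ a ∈ (Finset.univ.image W).filter (fun a => k a = b), probOf P W a := by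
  classical
  rw [probOf]
  simp only [Function.comp_apply]
  rw [← Finset.sum_fiberwise_of_maps_to (t := (Finset.univ.image W).filter (fun a => k a = b))
    (g := W) (fun ω hω => Finset.mem_filter.mpr
      ⟨Finset.mem_image_of_mem W (Finset.mem_univ ω), (Finset.mem_filter.mp hω).2⟩) P]
  refine Finset.sum_congr rfl fun a ha => ?_
  rw [Finset.mem_filter] at ha
  rw [probOf]
  congr 1
  ext ω
  simp only [Finset.mem_filter, Finset.mem_univ, true_and, Function.comp_apply]
  constructor
  · rintro ⟨_, h2⟩; exact h2
  · rintro rfl; exact ⟨ha.2, rfl⟩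

lemma entropy_comp_le {Ω α β : Type*} [Fintype Ω] {P : Ω → ℝ} (hP : ∀ ω, 0 < P ω)
    (W : Ω → α) (k : α → β) : entropy P (k ∘ W) ≤ entropy P W := by
  classical
  rw [entropy, entropy]
  rw [← Finset.sum_fiberwise_of_maps_to (t := Finset.univ.image (k ∘ W)) (g := k)
    (fun a ha => by
      rw [Finset.mem_image] at ha ⊢
      obtain ⟨ω, -, rfl⟩ := ha
      exact ⟨ω, Finset.mem_univ ω, rfl⟩)
    (fun a => probOf P W a * Real.log (1 / probOf P W a))]
  refine Finset.sum_le_sum fun b hb => ?_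
  rw [probOf_comp P W k b]
  rw [Finset.sum_mul]
  refine Finset.sum_le_sum fun a ha => ?_
  have ha' := Finset.mem_filter.mp ha
  have hq : 0 < probOf P W a := probOf_pos hP W ha'.1
  have hle : probOf P W a ≤ ∑ a' ∈ (Finset.univ.image W).filter (fun a' => k a' = b),
      probOf P W a' :=
    Finset.single_le_sum (fun a' ha'' => (probOf_pos hP W (Finset.mem_filter.mp ha'').1).le) ha
  refine mul_le_mul_of_nonneg_left ?_ hq.le
  exact Real.log_le_log (one_div_pos.mpr (hq.trans_le hle))
    (one_div_le_one_div_of_le hq hle)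

lemma entropy_comp_injective {Ω α β : Type*} [Fintype Ω] (P : Ω → ℝ)
    (W : Ω → α) (k : α → β) (hk : Function.Injective k) :
    entropy P (k ∘ W) = entropy P W := by
  classical
  have himg : Finset.univ.image (k ∘ W) = (Finset.univ.image W).image k := by
    rw [Finset.image_image]
  have hprob : ∀ a, probOf P (k ∘ W) (k a) = probOf P W a := by
    intro a
    rw [probOf, probOf]
    congr 1
    ext ω
    simp only [Finset.mem_filter, Function.comp_apply]
    exact and_congr_right fun _ => ⟨fun h => hk h, fun h => by rw [h]⟩
  rw [entropy, entropy, himg, Finset.sum_image (fun x _ y _ h => hk h)]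
  exact Finset.sum_congr rfl fun a _ => by rw [hprob a]

universe u

/-- logarithmic decomposition of the Gács–Körner common information.
Let `≈` be the equivalence relation generated by
`{(ω, ω') : X ω = X ω' ∨ Y ω = Y ω'}` and `Z : Ω → Ω/≈` the quotient map.  Then
`C(Z) ⊆ C(X) ∩ C(Y)`, and the Gács–Körner common information
`sup { H(f ∘ X) : f ∘ X = g ∘ Y }` equals `Σ_{S ∈ C(Z)} L°(S)`. -/
theorem gacsKorner_logarithmic_decomposition {Ω α β : Type*} [Fintype Ω] [Nonempty Ω]
    (P : Ω → ℝ) (hP : ∀ ω, 0 < P ω) (hsum : ∑ ω, P ω = 1)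
    (X : Ω → α) (Y : Ω → β)
    (s : Setoid Ω) (hs : s = Relation.EqvGen.setoid (fun ω ω' => X ω = X ω' ∨ Y ω = Y ω'))
    (Z : Ω → Quotient s) (hZ : Z = Quotient.mk s) :
    content Z ⊆ content X ∩ content Y ∧
      IsLUB {h : ℝ | ∃ (γ : Type u) (f : α → γ) (g : β → γ),
          f ∘ X = g ∘ Y ∧ h = entropy P (f ∘ X)}
        (∑ S ∈ content Z, interiorLoss S P) := by
  subst hs
  subst hZ
  set r : Ω → Ω → Prop := fun ω ω' => X ω = X ω' ∨ Y ω = Y ω' with hr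
  have hrel : ∀ {ω ω' : Ω}, r ω ω' →
      Quotient.mk (Relation.EqvGen.setoid r) ω = Quotient.mk (Relation.EqvGen.setoid r) ω' :=
    fun h => Quotient.sound (Relation.EqvGen.rel _ _ h)
  constructor
  · intro S hS
    simp only [content, Finset.mem_filter, Finset.mem_univ, true_and] at hS
    obtain ⟨hcard, ω, hω, ω2, hω2, hne⟩ := hS
    simp only [Finset.mem_inter, content, Finset.mem_filter, Finset.mem_univ, true_and]
    exact ⟨⟨hcard, ω, hω, ω2, hω2, fun h => hne (hrel (Or.inl h))⟩,
      ⟨hcard, ω, hω, ω2, hω2, fun h => hne (hrel (Or.inr h))⟩⟩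
  · have hE : (∑ S ∈ content (Quotient.mk (Relation.EqvGen.setoid r)), interiorLoss S P)
        = entropy P (Quotient.mk (Relation.EqvGen.setoid r)) :=
      (entropy_eq_sum_content P hsum _).symm
    rw [hE]
    refine IsGreatest.isLUB ⟨?_, ?_⟩
    · -- membership: the entropy of Z is attained
      set Q := Quotient (Relation.EqvGen.setoid r)
      set e0 : Q ≃ Fin (Fintype.card Q) := Fintype.equivFin Q with he0
      set e : Q → ULift.{u} (Fin (Fintype.card Q)) := fun q => ULift.up (e0 q) with he
      have he_inj : Function.Injective e := fun a b h =>
        e0.injective (congrArg ULift.down h)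
      refine ⟨ULift.{u} (Fin (Fintype.card Q)),
        fun a => if h : ∃ ω, X ω = a then e (Quotient.mk _ h.choose)
          else e (Quotient.mk _ (Classical.arbitrary Ω)),
        fun b => if h : ∃ ω, Y ω = b then e (Quotient.mk _ h.choose)
          else e (Quotient.mk _ (Classical.arbitrary Ω)), ?_, ?_⟩
      · funext ω
        have hX : (∃ ω', X ω' = X ω) := ⟨ω, rfl⟩
        have hY : (∃ ω', Y ω' = Y ω) := ⟨ω, rfl⟩
        simp only [Function.comp_apply, dif_pos hX, dif_pos hY]
        rw [hrel (Or.inl hX.choose_spec), hrel (Or.inr hY.choose_spec)]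
      · have hfX : (fun a => if h : ∃ ω, X ω = a then e (Quotient.mk _ h.choose)
            else e (Quotient.mk _ (Classical.arbitrary Ω))) ∘ X
            = e ∘ Quotient.mk (Relation.EqvGen.setoid r) := by
          funext ω
          have hX : (∃ ω', X ω' = X ω) := ⟨ω, rfl⟩
          simp only [Function.comp_apply, dif_pos hX]
          rw [hrel (Or.inl hX.choose_spec)]
        rw [hfX, entropy_comp_injective P _ e he_inj]
    · -- upper bound
      rintro h ⟨γ, f, g, hfg, rfl⟩
      have hresp : ∀ a b : Ω, Relation.EqvGen r a b → f (X a) = f (X b) := by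
        intro a b hab
        induction hab with
        | rel x y hxy =>
          rcases hxy with hxy | hxy
          · rw [hxy]
          · have h1 := congrFun hfg x
            have h2 := congrFun hfg y
            simp only [Function.comp_apply] at h1 h2
            rw [h1, h2, hxy]
        | refl => rfl
        | symm _ _ _ ih => exact ih.symm
        | trans _ _ _ _ _ ih1 ih2 => exact ih1.trans ih2
      have hk : f ∘ X = (Quotient.lift (f ∘ X) hresp) ∘ Quotient.mk (Relation.EqvGen.setoid r) :=
        rfl
      rw [hk]
      exact entropy_comp_le hP _ _
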